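/- Under the stated boundedness assumptions: (a) the sequence {d^k} is bounded, and hence so is {y^k}; moreover ‖d^k‖² ≤ (20/μ̲)(Θ_k(x^k) − Θ_k(y^k)) for all k ≥ k̄; and (b) for every k ≥ k̄ one has α_k ≥ α_min := min{1, β(μ̲ − 2σ)/(2L_f)} and F(x^k) − F(x^{k+1}) ≥ σ α_min ‖x^{k+1} − x^k‖². -/

import Mathlib

open Set Filter
open scoped RealInnerProductSpace ENNReal

noncomputable section

attribute [local instance] Classical.propDecidable

variable {X : Type*} [NormedAddCommGroup X] [InnerProductSpace ℝ X] [FiniteDimensional ℝ X]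

/-- `g` extended by `+∞` outside its domain `s`. -/
def extE (g : X → ℝ) (s : Set X) (x : X) : EReal := if x ∈ s then (g x : EReal) else ⊤

/-- The objective `F = f + g`, extended-real valued. -/
def FE (f g : X → ℝ) (s : Set X) (x : X) : EReal := (f x : EReal) + extE g s x

/-- The strongly convex model `Θ_k` with base point `xk` and metric `G`, evaluated at `z`. -/
def Theta (f g : X → ℝ) (fgrad : X → X) (G : X →L[ℝ] X) (xk z : X) : ℝ :=
  f xk + ⟪fgrad xk, z - xk⟫ + (1/2) * ⟪z - xk, G (z - xk)⟫ + g z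

open Topology

lemma FE_eq (f g : X → ℝ) {domg : Set X} {z : X} (hz : z ∈ domg) :
    FE f g domg z = ((f z + g z : ℝ) : EReal) := by
  simp [FE, extE, hz]

lemma mem_seg {s : Set X} (hs : Convex ℝ s) {a b : X} (ha : a ∈ s) (hb : b ∈ s)
    {t : ℝ} (h0 : 0 ≤ t) (h1 : t ≤ 1) : a + t • (b - a) ∈ s := by
  have h := hs ha hb (by linarith : (0:ℝ) ≤ 1 - t) h0 (by ring)
  have he : (1 - t) • a + t • b = a + t • (b - a) := by
    rw [smul_sub, sub_smul, one_smul]; abel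
  rwa [he] at h

lemma theta_base (f g : X → ℝ) (fgrad : X → X) (G : X →L[ℝ] X) (xk : X) :
    Theta f g fgrad G xk xk = f xk + g xk := by
  simp [Theta]

lemma theta_combo (f g : X → ℝ) (fgrad : X → X) (G : X →L[ℝ] X) {domg : Set X} {μ : ℝ}
    (hgconv : ConvexOn ℝ domg g)
    (hGsa : ∀ u v : X, ⟪G u, v⟫ = ⟪u, G v⟫)
    (hGlb : ∀ u : X, μ * ‖u‖ ^ 2 ≤ ⟪u, G u⟫)
    (xk : X) {a b : X} (ha : a ∈ domg) (hb : b ∈ domg) {t : ℝ} (ht0 : 0 ≤ t) (ht1 : t ≤ 1) :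
    Theta f g fgrad G xk ((1 - t) • a + t • b)
      ≤ (1 - t) * Theta f g fgrad G xk a + t * Theta f g fgrad G xk b
        - μ / 2 * (t * (1 - t)) * ‖b - a‖ ^ 2 := by
  set u := a - xk with hu
  set v := b - xk with hv
  have hz : ((1 - t) • a + t • b) - xk = (1 - t) • u + t • v := by
    rw [hu, hv, smul_sub, smul_sub, sub_smul, one_smul, sub_smul, one_smul]; abel
  have hsym : ⟪v, G u⟫ = ⟪u, G v⟫ := by rw [real_inner_comm]; exact hGsa u v
  have e1 : ⟪fgrad xk, (1 - t) • u + t • v⟫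
      = (1 - t) * ⟪fgrad xk, u⟫ + t * ⟪fgrad xk, v⟫ := by
    simp [inner_add_right, real_inner_smul_right]
  have e2 : ⟪(1 - t) • u + t • v, G ((1 - t) • u + t • v)⟫
      = (1 - t) ^ 2 * ⟪u, G u⟫ + 2 * (t * (1 - t)) * ⟪u, G v⟫ + t ^ 2 * ⟪v, G v⟫ := by
    simp only [map_add, ContinuousLinearMap.map_smul, inner_add_left, inner_add_right,
      real_inner_smul_left, real_inner_smul_right]
    rw [hsym]; ring
  have e3 : ⟪u - v, G (u - v)⟫ = ⟪u, G u⟫ - 2 * ⟪u, G v⟫ + ⟪v, G v⟫ := by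
    simp only [map_sub, inner_sub_left, inner_sub_right]
    rw [hsym]; ring
  have hq : μ * ‖b - a‖ ^ 2 ≤ ⟪u - v, G (u - v)⟫ := by
    have : u - v = a - b := by rw [hu, hv]; abel
    rw [this]
    have := hGlb (a - b)
    rwa [norm_sub_rev a b] at this
  have hg : g ((1 - t) • a + t • b) ≤ (1 - t) * g a + t * g b :=
    hgconv.2 ha hb (by linarith) ht0 (by ring)
  have htt : 0 ≤ t * (1 - t) := mul_nonneg ht0 (by linarith)
  have hkey : 0 ≤ t * (1 - t) * (⟪u - v, G (u - v)⟫ - μ * ‖b - a‖ ^ 2) :=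
    mul_nonneg htt (by linarith)
  simp only [Theta, hz]
  rw [e1, e2]
  have ha' : a - xk = u := rfl
  have hb' : b - xk = v := rfl
  rw [ha', hb']
  nlinarith [hkey, e3]

lemma theta_growth (f g : X → ℝ) (fgrad : X → X) (G : X →L[ℝ] X) {domg : Set X} {μ : ℝ}
    (hgconv : ConvexOn ℝ domg g)
    (hGsa : ∀ u v : X, ⟪G u, v⟫ = ⟪u, G v⟫)
    (hGlb : ∀ u : X, μ * ‖u‖ ^ 2 ≤ ⟪u, G u⟫)
    (xk : X) {xb z : X} (hxb : xb ∈ domg) (hz : z ∈ domg)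
    (hmin : ∀ w ∈ domg, Theta f g fgrad G xk xb ≤ Theta f g fgrad G xk w) :
    μ / 2 * ‖z - xb‖ ^ 2 ≤ Theta f g fgrad G xk z - Theta f g fgrad G xk xb := by
  have key : ∀ t : ℝ, 0 < t → t ≤ 1 → μ / 2 * (1 - t) * ‖z - xb‖ ^ 2
      ≤ Theta f g fgrad G xk z - Theta f g fgrad G xk xb := by
    intro t ht0 ht1
    have hmem : (1 - t) • xb + t • z ∈ domg := by
      have := mem_seg hgconv.1 hxb hz ht0.le ht1
      have he : (1 - t) • xb + t • z = xb + t • (z - xb) := by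
        rw [smul_sub, sub_smul, one_smul]; abel
      rwa [he]
    have hcombo := theta_combo f g fgrad G hgconv hGsa hGlb xk hxb hz ht0.le ht1
    have hmin' := hmin _ hmem
    nlinarith [hcombo, hmin', ht0]
  set c := ‖z - xb‖ ^ 2 with hc
  set D := Theta f g fgrad G xk z - Theta f g fgrad G xk xb with hD
  have htend : Tendsto (fun n : ℕ => μ / 2 * (1 - 1 / ((n : ℝ) + 2)) * c) atTop
      (𝓝 (μ / 2 * (1 - 0) * c)) := by
    have h1 : Tendsto (fun n : ℕ => ((n : ℝ) + 2)) atTop atTop :=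
      tendsto_atTop_add_const_right _ 2 tendsto_natCast_atTop_atTop
    have h2 : Tendsto (fun n : ℕ => 1 / ((n : ℝ) + 2)) atTop (𝓝 0) := by
      rw [show (fun n : ℕ => 1 / ((n : ℝ) + 2)) = (fun n : ℕ => ((n : ℝ) + 2))⁻¹ from by
        funext n; simp [one_div]]
      exact h1.inv_tendsto_atTop
    exact ((tendsto_const_nhds.sub h2).const_mul _).mul_const _
  have hle : μ / 2 * (1 - 0) * c ≤ D := by
    refine le_of_tendsto' htend fun n => ?_
    refine key _ (by positivity) ?_
    rw [div_le_one (by positivity)]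
    have : (0:ℝ) ≤ (n:ℝ) := Nat.cast_nonneg n
    linarith
  simpa using hle

lemma descent_lemma (f : X → ℝ) (fgrad : X → X) {O Γ : Set X} {Lf : ℝ}
    (hΓconv : Convex ℝ Γ) (hΓO : Γ ⊆ O)
    (hfgrad : ∀ z ∈ O, HasGradientAt f (fgrad z) z)
    (hLf : 0 ≤ Lf) (hLip : LipschitzOnWith (Real.toNNReal Lf) fgrad Γ)
    {x y : X} (hx : x ∈ Γ) (hy : y ∈ Γ) {t : ℝ} (ht0 : 0 ≤ t) (ht1 : t ≤ 1) :
    f (x + t • (y - x)) ≤ f x + t * ⟪fgrad x, y - x⟫ + Lf / 2 * t ^ 2 * ‖y - x‖ ^ 2 := by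
  set v := y - x with hv
  set c := ⟪fgrad x, v⟫ with hcdef
  set h : ℝ → ℝ := fun s => f (x + s • v) - s * c - s ^ 2 * (Lf / 2 * ‖v‖ ^ 2) with hhdef
  have hmem : ∀ s : ℝ, s ∈ Icc (0:ℝ) 1 → x + s • v ∈ Γ := fun s hs =>
    mem_seg hΓconv hx hy hs.1 hs.2
  have hD : ∀ s ∈ Icc (0:ℝ) 1,
      HasDerivAt h (⟪fgrad (x + s • v), v⟫ - c - 2 * s * (Lf / 2 * ‖v‖ ^ 2)) s := by
    intro s hs
    have hcur : HasDerivAt (fun s : ℝ => x + s • v) v s := by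
      simpa using ((hasDerivAt_id s).smul_const v).const_add x
    have hf' := hfgrad _ (hΓO (hmem s hs))
    have hfd := (hasGradientAt_iff_hasFDerivAt.1 hf').comp_hasDerivAt s hcur
    have h1 : HasDerivAt (fun s : ℝ => f (x + s • v)) ⟪fgrad (x + s • v), v⟫ s := by
      have h := hfd
      simp [InnerProductSpace.toDual_apply_apply] at h
      exact h
    have h2 : HasDerivAt (fun s : ℝ => s * c) c s := by
      simpa using (hasDerivAt_id s).mul_const c
    have h3 : HasDerivAt (fun s : ℝ => s ^ 2 * (Lf / 2 * ‖v‖ ^ 2))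
        (2 * s * (Lf / 2 * ‖v‖ ^ 2)) s := by
      simpa using (hasDerivAt_pow 2 s).mul_const (Lf / 2 * ‖v‖ ^ 2)
    have h4 := (h1.sub h2).sub h3
    exact h4
  have hanti : AntitoneOn h (Icc (0:ℝ) 1) := by
    refine antitoneOn_of_deriv_nonpos (convex_Icc 0 1)
      (fun s hs => (hD s hs).continuousAt.continuousWithinAt)
      (fun s hs => ?_) (fun s hs => ?_)
    · rw [interior_Icc] at hs
      exact ((hD s (Ioo_subset_Icc_self hs)).differentiableAt).differentiableWithinAt
    · rw [interior_Icc] at hs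
      have hs' := Ioo_subset_Icc_self hs
      rw [(hD s hs').deriv]
      have hip : ⟪fgrad (x + s • v) - fgrad x, v⟫ ≤ Lf * s * ‖v‖ ^ 2 := by
        have h1 := real_inner_le_norm (fgrad (x + s • v) - fgrad x) v
        have h2 : ‖fgrad (x + s • v) - fgrad x‖ ≤ Lf * (s * ‖v‖) := by
          have := hLip.dist_le_mul _ (hmem s hs') _ hx
          rw [dist_eq_norm, dist_eq_norm] at this
          have he : x + s • v - x = s • v := by abel
          rw [he, norm_smul, Real.norm_eq_abs, abs_of_nonneg hs.1.le] at this
          rwa [Real.coe_toNNReal _ hLf] at this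
        calc ⟪fgrad (x + s • v) - fgrad x, v⟫ ≤ ‖fgrad (x + s • v) - fgrad x‖ * ‖v‖ := h1
          _ ≤ Lf * (s * ‖v‖) * ‖v‖ := by
              exact mul_le_mul_of_nonneg_right h2 (norm_nonneg v)
          _ = Lf * s * ‖v‖ ^ 2 := by ring
      have hip' : ⟪fgrad (x + s • v), v⟫ - c ≤ Lf * s * ‖v‖ ^ 2 := by
        rw [hcdef]
        have : ⟪fgrad (x + s • v) - fgrad x, v⟫
            = ⟪fgrad (x + s • v), v⟫ - ⟪fgrad x, v⟫ := inner_sub_left _ _ _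
        linarith [hip, this.symm.le, this.le]
      linarith
  have h0mem : (0:ℝ) ∈ Icc (0:ℝ) 1 := ⟨le_refl 0, zero_le_one⟩
  have htmem : t ∈ Icc (0:ℝ) 1 := ⟨ht0, ht1⟩
  have := hanti h0mem htmem ht0
  simp only [hhdef, zero_smul, add_zero, zero_mul, sub_zero, ne_eq, OfNat.ofNat_ne_zero,
    not_false_eq_true, zero_pow] at this
  nlinarith [this]

set_option maxHeartbeats 2000000 in
/-- boundedness of `{d^k}` and `{y^k}`, the bound
`‖d^k‖² ≤ (20/μ)(Θ_k(x^k) - Θ_k(y^k))`, the step-size lower bound, and the sufficient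
decrease of `F`. -/
theorem vmipg_stepsize_decrease
    (f g : X → ℝ) (domg O : Set X) (fgrad : X → X)
    (hdom : domg.Nonempty) (hO : IsOpen O) (hclO : closure domg ⊆ O)
    (hgconv : ConvexOn ℝ domg g) (hgcont : ContinuousOn g domg)
    (hglsc : LowerSemicontinuous (extE g domg))
    (hflsc : LowerSemicontinuous f)
    (hfC2 : ContDiffOn ℝ 2 f O)
    (hfgrad : ∀ z ∈ O, HasGradientAt f (fgrad z) z)
    (hFlb : ∃ c : ℝ, ∀ z ∈ domg, c ≤ f z + g z)
    (μ σ β : ℝ) (hμ : 0 < μ) (hβ : 0 < β ∧ β < 1) (hσ : 0 < σ ∧ σ < (1/2) * min 1 μ)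
    (eps : ℕ → ℝ) (heps : ∀ k, 0 < eps k) (hepsbd : ∃ C : ℝ, ∀ k, eps k ≤ C)
    (kbar : ℕ) (hkbar : ∀ k, kbar ≤ k → eps k ≤ μ / 10)
    (x y xbar : ℕ → X) (G : ℕ → X →L[ℝ] X) (m : ℕ → ℕ)
    (hx0 : x 0 ∈ domg)
    (hGsa : ∀ k, ∀ u v : X, ⟪G k u, v⟫ = ⟪u, G k v⟫)
    (hGlb : ∀ k, ∀ u : X, μ * ‖u‖ ^ 2 ≤ ⟪u, G k u⟫)
    (hxbar : ∀ k, xbar k ∈ domg ∧ ∀ z ∈ domg,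
      Theta f g fgrad (G k) (x k) (xbar k) ≤ Theta f g fgrad (G k) (x k) z)
    (hy : ∀ k, y k ∈ domg ∧
      Theta f g fgrad (G k) (x k) (y k) < Theta f g fgrad (G k) (x k) (x k) ∧
      Theta f g fgrad (G k) (x k) (y k) - Theta f g fgrad (G k) (x k) (xbar k)
        ≤ eps k * ‖y k - x k‖ ^ 2)
    (hls : ∀ k,
      (FE f g domg (x k + β ^ (m k) • (y k - x k))
        ≤ ((f (x k) + g (x k) - σ * β ^ (m k) * ‖y k - x k‖ ^ 2 : ℝ) : EReal)) ∧
      ∀ j < m k, ¬ (FE f g domg (x k + β ^ j • (y k - x k))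
        ≤ ((f (x k) + g (x k) - σ * β ^ j * ‖y k - x k‖ ^ 2 : ℝ) : EReal)))
    (hupd : ∀ k,
      (FE f g domg (y k) < FE f g domg (x k + β ^ (m k) • (y k - x k)) ∧ x (k+1) = y k) ∨
      ((¬ FE f g domg (y k) < FE f g domg (x k + β ^ (m k) • (y k - x k))) ∧
        x (k+1) = x k + β ^ (m k) • (y k - x k)))
    (hxbdd : ∃ R : ℝ, ∀ k, ‖x k‖ ≤ R)
    (μbar : ℝ) (hμbar : 0 < μbar) (hGub : ∀ k, ‖G k‖ ≤ μbar)
    (Γ : Set X) (hΓc : IsCompact Γ) (hΓconv : Convex ℝ Γ) (hΓO : Γ ⊆ O)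
    (hΓx : ∀ k, x k ∈ Γ) (hΓy : ∀ k, y k ∈ Γ)
    (Lf : ℝ) (hLf : 0 < Lf) (hLip : LipschitzOnWith (Real.toNNReal Lf) fgrad Γ)
    :
    ((∃ R : ℝ, ∀ k, ‖y k - x k‖ ≤ R) ∧ (∃ R : ℝ, ∀ k, ‖y k‖ ≤ R)) ∧
    (∀ k, kbar ≤ k →
      ‖y k - x k‖ ^ 2 ≤ (20 / μ) *
        (Theta f g fgrad (G k) (x k) (x k) - Theta f g fgrad (G k) (x k) (y k))) ∧
    (∀ k, kbar ≤ k →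
      min 1 ((μ - 2 * σ) / (2 * Lf) * β) ≤ β ^ (m k) ∧
      FE f g domg (x (k + 1)) +
          ((σ * min 1 ((μ - 2 * σ) / (2 * Lf) * β) * ‖x (k + 1) - x k‖ ^ 2 : ℝ) : EReal)
        ≤ FE f g domg (x k)) := by
  -- basic facts
  obtain ⟨hσ0, hσ1⟩ := hσ
  obtain ⟨hβ0, hβ1⟩ := hβ
  have hσμ : 2 * σ < μ := by
    have := min_le_right (1:ℝ) μ
    nlinarith
  have hxdomg : ∀ k, x k ∈ domg := by
    intro k
    induction k with
    | zero => exact hx0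
    | succ n ih =>
      rcases hupd n with ⟨_, h⟩ | ⟨_, h⟩
      · rw [h]; exact (hy n).1
      · rw [h]
        exact mem_seg hgconv.1 ih (hy n).1 (pow_nonneg hβ0.le _)
          (pow_le_one₀ hβ0.le hβ1.le)
  -- Part 1
  obtain ⟨R, hR⟩ := hΓc.isBounded.exists_norm_le
  have part1 : (∃ R : ℝ, ∀ k, ‖y k - x k‖ ≤ R) ∧ (∃ R : ℝ, ∀ k, ‖y k‖ ≤ R) := by
    constructor
    · exact ⟨R + R, fun k => le_trans (norm_sub_le _ _)
        (add_le_add (hR _ (hΓy k)) (hR _ (hΓx k)))⟩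
    · exact ⟨R, fun k => hR _ (hΓy k)⟩
  refine ⟨part1, ?_, ?_⟩
  -- Part 2
  · intro k hk
    obtain ⟨hxbdom, hxbmin⟩ := hxbar k
    obtain ⟨hydom, hylt, hyineq⟩ := hy k
    have hgr1 := theta_growth f g fgrad (G k) hgconv (hGsa k) (hGlb k) (x k) hxbdom
      (hxdomg k) hxbmin
    have hgr2 := theta_growth f g fgrad (G k) hgconv (hGsa k) (hGlb k) (x k) hxbdom
      hydom hxbmin
    have heps' : eps k ≤ μ / 10 := hkbar k hk
    have hEbd : Theta f g fgrad (G k) (x k) (y k) - Theta f g fgrad (G k) (x k) (xbar k)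
        ≤ μ / 10 * ‖y k - x k‖ ^ 2 := by
      refine le_trans hyineq ?_
      exact mul_le_mul_of_nonneg_right heps' (by positivity)
    have htri : ‖y k - x k‖ ≤ ‖y k - xbar k‖ + ‖x k - xbar k‖ := by
      have he : y k - x k = (y k - xbar k) - (x k - xbar k) := by abel
      rw [he]
      exact norm_sub_le _ _
    have hsq : ‖y k - x k‖ ^ 2 ≤ 2 * ‖y k - xbar k‖ ^ 2 + 2 * ‖x k - xbar k‖ ^ 2 := by
      nlinarith [htri, norm_nonneg (y k - x k), norm_nonneg (y k - xbar k),
        norm_nonneg (x k - xbar k), sq_nonneg (‖y k - xbar k‖ - ‖x k - xbar k‖)]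
    rw [div_mul_eq_mul_div, le_div_iff₀ hμ]
    nlinarith [hgr1, hgr2, hEbd, hsq]
  -- Part 3
  · intro k hk
    obtain ⟨hydom, hylt, _⟩ := hy k
    have hxkdom := hxdomg k
    set d := y k - x k with hd
    set A := ‖y k - x k‖ ^ 2 with hA
    clear_value d A
    have hA0 : 0 ≤ A := by rw [hA]; positivity
    have hmem : ∀ s : ℝ, 0 ≤ s → s ≤ 1 → x k + s • d ∈ domg := by
      intro s h0 h1
      rw [hd]
      exact mem_seg hgconv.1 hxkdom hydom h0 h1
    -- model decrease
    have hmodel : ⟪fgrad (x k), d⟫ + g (y k) - g (x k) ≤ -(μ / 2) * A := by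
      have hq := hGlb k d
      have hAd : A = ‖d‖ ^ 2 := by rw [hA, hd]
      rw [← hAd] at hq
      rw [theta_base f g fgrad (G k) (x k)] at hylt
      simp only [Theta] at hylt
      rw [← hd] at hylt
      nlinarith [hylt, hq]
    -- combined upper bound along the segment
    have hcomb : ∀ s : ℝ, 0 ≤ s → s ≤ 1 →
        f (x k + s • d) + g (x k + s • d)
          ≤ f (x k) + g (x k) - s * (μ / 2) * A + Lf / 2 * s ^ 2 * A := by
      intro s h0 h1
      have hdes := descent_lemma f fgrad hΓconv hΓO hfgrad hLf.le hLip (hΓx k) (hΓy k) h0 h1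
      rw [← hA, ← hd] at hdes
      have hgc : g (x k + s • d) ≤ (1 - s) * g (x k) + s * g (y k) := by
        have := hgconv.2 hxkdom hydom (by linarith : (0:ℝ) ≤ 1 - s) h0 (by ring)
        have he : (1 - s) • x k + s • y k = x k + s • d := by
          rw [hd, smul_sub, sub_smul, one_smul]; abel
        rwa [he] at this
      have hmul : s * (⟪fgrad (x k), d⟫ + g (y k) - g (x k)) ≤ s * (-(μ / 2) * A) :=
        mul_le_mul_of_nonneg_left hmodel h0
      nlinarith [hdes, hgc, hmul]
    -- step size lower bound
    have ht0 : (0:ℝ) < β ^ (m k) := pow_pos hβ0 _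
    have ht1 : β ^ (m k) ≤ 1 := pow_le_one₀ hβ0.le hβ1.le
    have hαm : min 1 ((μ - 2 * σ) / (2 * Lf) * β) ≤ β ^ (m k) := by
      rcases Nat.eq_zero_or_pos (m k) with h0 | hpos
      · rw [h0, pow_zero]
        exact min_le_left _ _
      · obtain ⟨j, hj⟩ : ∃ j, m k = j + 1 := ⟨m k - 1, (Nat.succ_pred_eq_of_pos hpos).symm⟩
        have hfail := (hls k).2 j (by omega)
        rw [← hA, ← hd] at hfail
        set s := β ^ j with hs
        clear_value s
        have hs0 : (0:ℝ) < s := by rw [hs]; positivity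
        have hs1 : s ≤ 1 := by rw [hs]; exact pow_le_one₀ hβ0.le hβ1.le
        have hjmem : x k + s • d ∈ domg := hmem s hs0.le hs1
        rw [FE_eq f g hjmem, EReal.coe_le_coe_iff, not_le] at hfail
        have hcb := hcomb s hs0.le hs1
        have hchain := hfail.trans_le hcb
        have hApos : 0 < A := by
          by_contra hc
          push_neg at hc
          have hA00 : A = 0 := le_antisymm hc hA0
          rw [hA00] at hchain
          simp at hchain
        have hkey : μ - 2 * σ < Lf * s := by
          nlinarith [mul_pos hs0 hApos, hchain]
        have h1 : (μ - 2 * σ) / (2 * Lf) ≤ s := by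
          rw [div_le_iff₀ (by linarith)]
          nlinarith [mul_pos hLf hs0]
        calc min 1 ((μ - 2 * σ) / (2 * Lf) * β) ≤ (μ - 2 * σ) / (2 * Lf) * β :=
              min_le_right _ _
          _ ≤ s * β := mul_le_mul_of_nonneg_right h1 hβ0.le
          _ = β ^ (j + 1) := by rw [hs, pow_succ]
          _ = β ^ (m k) := by rw [hj]
    refine ⟨hαm, ?_⟩
    -- sufficient decrease
    set αm := min 1 ((μ - 2 * σ) / (2 * Lf) * β) with hαmdef
    clear_value αm
    have hαm0 : 0 < αm := by
      rw [hαmdef]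
      apply lt_min one_pos
      have h2Lf : 0 < μ - 2 * σ := by linarith
      positivity
    have hαm1 : αm ≤ 1 := by rw [hαmdef]; exact min_le_left _ _
    have hsucc := (hls k).1
    rw [← hA, ← hd] at hsucc
    have htmem : x k + β ^ (m k) • d ∈ domg := hmem _ ht0.le ht1
    rw [FE_eq f g htmem, EReal.coe_le_coe_iff] at hsucc
    rcases hupd k with ⟨hlt, hxeq⟩ | ⟨_, hxeq⟩
    · -- x (k+1) = y k
      rw [← hd] at hlt
      rw [FE_eq f g htmem, FE_eq f g hydom, EReal.coe_lt_coe_iff] at hlt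
      rw [hxeq, FE_eq f g hydom, FE_eq f g hxkdom, ← EReal.coe_add, EReal.coe_le_coe_iff]
      have hAeq : ‖y k - x k‖ ^ 2 = A := hA.symm
      rw [hAeq]
      have hle1 : σ * αm * A ≤ σ * β ^ (m k) * A := by
        have := mul_le_mul_of_nonneg_left hαm (le_of_lt hσ0)
        exact mul_le_mul_of_nonneg_right this hA0
      linarith [hlt, hsucc, hle1]
    · -- x (k+1) = x k + β ^ (m k) • d
      rw [hxeq, ← hd, FE_eq f g htmem, FE_eq f g hxkdom, ← EReal.coe_add, EReal.coe_le_coe_iff]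
      have hnorm : ‖x k + β ^ (m k) • d - x k‖ ^ 2 = (β ^ (m k)) ^ 2 * A := by
        have he : x k + β ^ (m k) • d - x k = β ^ (m k) • d := by abel
        rw [he, norm_smul, Real.norm_eq_abs, abs_of_pos ht0, mul_pow, hA, hd]
      rw [hnorm]
      have hle1 : σ * αm * ((β ^ (m k)) ^ 2 * A) ≤ σ * β ^ (m k) * A := by
        have h2 : αm * (β ^ (m k)) ^ 2 ≤ β ^ (m k) := by
          nlinarith [hαm0.le, hαm1, ht0.le, ht1]
        calc σ * αm * ((β ^ (m k)) ^ 2 * A) = σ * (αm * (β ^ (m k)) ^ 2) * A := by ring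
          _ ≤ σ * β ^ (m k) * A := by
            exact mul_le_mul_of_nonneg_right
              (mul_le_mul_of_nonneg_left h2 hσ0.le) hA0
      linarith [hsucc, hle1]
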